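/- For 0 < q < 1 and n ≥ 0, the limit as z → 0+ of I_{n-1}(q;z) · I_{n+1}(q;z) / (I_n(q;z))^2 equals (1 - q^{n+1})/(1 - q^{n+2}); hence the constant (1 - q^{n+1})/(1 - q^{n+2}) in the Turán inequality for I_n is best possible. -/

import Mathlib

open Finset Filter Topology

noncomputable def qPoch (q : ℝ) (m : ℕ) : ℝ := ∏ j ∈ Finset.range m, (1 - q ^ (j + 1))

/-- Tail of the q-exponential e(q;z) starting at index m; I_n(q;z) = qexpTail q z (n+1). -/
noncomputable def qexpTail (q z : ℝ) (m : ℕ) : ℝ := ∑' k : ℕ, z ^ (m + k) / qPoch q (m + k)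

section Aux

variable {q : ℝ}

lemma qPoch_pos (hq0 : 0 < q) (hq1 : q < 1) (m : ℕ) : 0 < qPoch q m := by
  refine Finset.prod_pos fun j _ => ?_
  have : q ^ (j + 1) < 1 := pow_lt_one₀ hq0.le hq1 (Nat.succ_ne_zero j)
  linarith

lemma qPoch_ge (hq0 : 0 < q) (hq1 : q < 1) (m : ℕ) : (1 - q) ^ m ≤ qPoch q m := by
  rw [qPoch]
  calc (1 - q) ^ m = ∏ _j ∈ Finset.range m, (1 - q) := by
        rw [Finset.prod_const, Finset.card_range]
    _ ≤ ∏ j ∈ Finset.range m, (1 - q ^ (j + 1)) := ?_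
  refine Finset.prod_le_prod (fun j _ => by linarith) (fun j _ => ?_)
  have h : q ^ (j + 1) ≤ q ^ 1 :=
    pow_le_pow_of_le_one hq0.le hq1.le (Nat.one_le_iff_ne_zero.mpr (Nat.succ_ne_zero j))
  simp only [pow_one] at h
  linarith

lemma qPoch_succ (q : ℝ) (m : ℕ) : qPoch q (m + 1) = qPoch q m * (1 - q ^ (m + 1)) := by
  rw [qPoch, Finset.prod_range_succ]; rfl

/-- auxiliary series -/
noncomputable def Sq (q z : ℝ) (m : ℕ) : ℝ := ∑' k : ℕ, z ^ k / qPoch q (m + k)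

lemma term_le (hq0 : 0 < q) (hq1 : q < 1) {z : ℝ} (hz : 0 ≤ z) (m k : ℕ) :
    z ^ k / qPoch q (m + k) ≤ (1 / (1 - q)) ^ m * (z / (1 - q)) ^ k := by
  have ha : (0:ℝ) < 1 - q := by linarith
  have h1 : (1 - q) ^ (m + k) ≤ qPoch q (m + k) := qPoch_ge hq0 hq1 (m + k)
  have h2 : z ^ k / qPoch q (m + k) ≤ z ^ k / (1 - q) ^ (m + k) := by
    apply div_le_div_of_nonneg_left (by positivity) (by positivity) h1
  calc z ^ k / qPoch q (m + k) ≤ z ^ k / (1 - q) ^ (m + k) := h2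
    _ = (1 / (1 - q)) ^ m * (z / (1 - q)) ^ k := by
        rw [pow_add, div_pow, div_pow, one_pow]
        field_simp

lemma summable_Sq (hq0 : 0 < q) (hq1 : q < 1) {z : ℝ} (hz0 : 0 ≤ z) (hz : z < 1 - q) (m : ℕ) :
    Summable (fun k : ℕ => z ^ k / qPoch q (m + k)) := by
  have ha : (0:ℝ) < 1 - q := by linarith
  have hr : z / (1 - q) < 1 := by rw [div_lt_one ha]; linarith
  have hr0 : 0 ≤ z / (1 - q) := by positivity
  have hgeo : Summable (fun k : ℕ => (1 / (1 - q)) ^ m * (z / (1 - q)) ^ k) :=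
    (summable_geometric_of_lt_one hr0 hr).mul_left _
  refine hgeo.of_nonneg_of_le (fun k => div_nonneg (by positivity) (qPoch_pos hq0 hq1 _).le) (fun k => term_le hq0 hq1 hz0 m k)

lemma qexpTail_eq (hq0 : 0 < q) (hq1 : q < 1) (z : ℝ) (m : ℕ) :
    qexpTail q z m = z ^ m * Sq q z m := by
  rw [qexpTail, Sq, ← tsum_mul_left]
  congr 1 with k
  rw [pow_add, mul_div_assoc]

lemma Sq_lower (hq0 : 0 < q) (hq1 : q < 1) {z : ℝ} (hz0 : 0 ≤ z) (hz : z < 1 - q) (m : ℕ) :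
    1 / qPoch q m ≤ Sq q z m := by
  have hs := summable_Sq hq0 hq1 hz0 hz m
  have := Summable.le_tsum hs 0 (fun k _ => div_nonneg (by positivity) (qPoch_pos hq0 hq1 _).le)
  simpa [Sq] using this

lemma Sq_upper (hq0 : 0 < q) (hq1 : q < 1) {z : ℝ} (hz0 : 0 ≤ z) (hz : z ≤ (1 - q) / 2) (m : ℕ) :
    Sq q z m ≤ 1 / qPoch q m + 2 * (1 / (1 - q)) ^ (m + 1) * z := by
  have ha : (0:ℝ) < 1 - q := by linarith
  have hz' : z < 1 - q := by linarith
  have hs := summable_Sq hq0 hq1 hz0 hz' m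
  have hsplit : Sq q z m = z ^ 0 / qPoch q (m + 0) + ∑' k : ℕ, z ^ (k + 1) / qPoch q (m + (k + 1)) := by
    rw [Sq, Summable.tsum_eq_zero_add hs]
  have hs1 : Summable (fun k : ℕ => z ^ k / qPoch q (m + 1 + k)) :=
    summable_Sq hq0 hq1 hz0 hz' (m + 1)
  have htail : (∑' k : ℕ, z ^ (k + 1) / qPoch q (m + (k + 1)))
      ≤ 2 * (1 / (1 - q)) ^ (m + 1) * z := by
    have heq : (∑' k : ℕ, z ^ (k + 1) / qPoch q (m + (k + 1)))
        = z * ∑' k : ℕ, z ^ k / qPoch q (m + 1 + k) := by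
      rw [← tsum_mul_left]
      congr 1 with k
      rw [pow_succ]
      have : m + (k + 1) = m + 1 + k := by ring
      rw [this]
      ring
    rw [heq]
    have hr : z / (1 - q) < 1 := by rw [div_lt_one ha]; linarith
    have hr0 : 0 ≤ z / (1 - q) := by positivity
    have hgeo : Summable (fun k : ℕ => (1 / (1 - q)) ^ (m + 1) * (z / (1 - q)) ^ k) :=
      (summable_geometric_of_lt_one hr0 hr).mul_left _
    have h1 : (∑' k : ℕ, z ^ k / qPoch q (m + 1 + k))
        ≤ ∑' k : ℕ, (1 / (1 - q)) ^ (m + 1) * (z / (1 - q)) ^ k :=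
      Summable.tsum_le_tsum (fun k => term_le hq0 hq1 hz0 (m + 1) k) hs1 hgeo
    have h2 : (∑' k : ℕ, (1 / (1 - q)) ^ (m + 1) * (z / (1 - q)) ^ k)
        = (1 / (1 - q)) ^ (m + 1) * (1 - z / (1 - q))⁻¹ := by
      rw [tsum_mul_left, tsum_geometric_of_lt_one hr0 hr]
    have h3 : (1 - z / (1 - q))⁻¹ ≤ 2 := by
      have hhalf : z / (1 - q) ≤ 1 / 2 := by
        rw [div_le_div_iff₀ ha (by norm_num)]; linarith
      have : (1:ℝ)/2 ≤ 1 - z / (1 - q) := by linarith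
      calc (1 - z / (1 - q))⁻¹ ≤ ((1:ℝ)/2)⁻¹ := by
            apply inv_anti₀ (by norm_num) this
        _ = 2 := by norm_num
    have h4 : (∑' k : ℕ, z ^ k / qPoch q (m + 1 + k)) ≤ (1 / (1 - q)) ^ (m + 1) * 2 := by
      refine h1.trans ?_
      rw [h2]
      exact mul_le_mul_of_nonneg_left h3 (by positivity)
    calc z * ∑' k : ℕ, z ^ k / qPoch q (m + 1 + k)
        ≤ z * ((1 / (1 - q)) ^ (m + 1) * 2) := by
          exact mul_le_mul_of_nonneg_left h4 hz0
      _ = 2 * (1 / (1 - q)) ^ (m + 1) * z := by ring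
  rw [hsplit]
  simp only [pow_zero, Nat.add_zero]
  linarith

lemma tendsto_Sq (hq0 : 0 < q) (hq1 : q < 1) (m : ℕ) :
    Tendsto (fun z : ℝ => Sq q z m) (𝓝[>] 0) (𝓝 (1 / qPoch q m)) := by
  have ha : (0:ℝ) < 1 - q := by linarith
  have hmem : Set.Ioo (0:ℝ) ((1 - q) / 2) ∈ 𝓝[>] (0:ℝ) :=
    Ioo_mem_nhdsGT_of_mem (by constructor <;> [rfl; positivity])
  have hlow : ∀ᶠ z in 𝓝[>] (0:ℝ), 1 / qPoch q m ≤ Sq q z m := by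
    filter_upwards [hmem] with z hz
    exact Sq_lower hq0 hq1 hz.1.le (by linarith [hz.2]) m
  have hup : ∀ᶠ z in 𝓝[>] (0:ℝ), Sq q z m ≤ 1 / qPoch q m + 2 * (1 / (1 - q)) ^ (m + 1) * z := by
    filter_upwards [hmem] with z hz
    exact Sq_upper hq0 hq1 hz.1.le hz.2.le m
  have hconst : Tendsto (fun _ : ℝ => 1 / qPoch q m) (𝓝[>] (0:ℝ)) (𝓝 (1 / qPoch q m)) :=
    tendsto_const_nhds
  have hupper : Tendsto (fun z : ℝ => 1 / qPoch q m + 2 * (1 / (1 - q)) ^ (m + 1) * z)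
      (𝓝[>] (0:ℝ)) (𝓝 (1 / qPoch q m)) := by
    have : Tendsto (fun z : ℝ => 1 / qPoch q m + 2 * (1 / (1 - q)) ^ (m + 1) * z)
        (𝓝 (0:ℝ)) (𝓝 (1 / qPoch q m + 2 * (1 / (1 - q)) ^ (m + 1) * 0)) :=
      (Continuous.tendsto (by continuity) 0)
    simpa using this.mono_left nhdsWithin_le_nhds
  exact tendsto_of_tendsto_of_tendsto_of_le_of_le' hconst hupper hlow hup

end Aux

theorem turan_I_best_constant (q : ℝ) (n : ℕ) (hq0 : 0 < q) (hq1 : q < 1) :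
    Tendsto (fun z : ℝ => qexpTail q z n * qexpTail q z (n + 2) / (qexpTail q z (n + 1)) ^ 2)
      (𝓝[>] 0) (𝓝 ((1 - q ^ (n + 1)) / (1 - q ^ (n + 2)))) := by
  have hP0 : 0 < qPoch q n := qPoch_pos hq0 hq1 n
  have hP1 : 0 < qPoch q (n + 1) := qPoch_pos hq0 hq1 (n + 1)
  have hP2 : 0 < qPoch q (n + 2) := qPoch_pos hq0 hq1 (n + 2)
  have h1 : Tendsto (fun z : ℝ => Sq q z n * Sq q z (n + 2) / (Sq q z (n + 1)) ^ 2)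
      (𝓝[>] 0) (𝓝 ((1 / qPoch q n) * (1 / qPoch q (n + 2)) / (1 / qPoch q (n + 1)) ^ 2)) := by
    refine Tendsto.div ((tendsto_Sq hq0 hq1 n).mul (tendsto_Sq hq0 hq1 (n + 2)))
      ((tendsto_Sq hq0 hq1 (n + 1)).pow 2) ?_
    exact ne_of_gt (pow_pos (one_div_pos.mpr hP1) 2)
  have hval : (1 / qPoch q n) * (1 / qPoch q (n + 2)) / (1 / qPoch q (n + 1)) ^ 2
      = (1 - q ^ (n + 1)) / (1 - q ^ (n + 2)) := by
    have e1 : qPoch q (n + 1) = qPoch q n * (1 - q ^ (n + 1)) := qPoch_succ q n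
    have e2 : qPoch q (n + 2) = qPoch q (n + 1) * (1 - q ^ (n + 2)) := qPoch_succ q (n + 1)
    have hq1' : (0:ℝ) < 1 - q ^ (n + 1) := by
      have : q ^ (n + 1) < 1 := pow_lt_one₀ hq0.le hq1 (Nat.succ_ne_zero n)
      linarith
    have hq2' : (0:ℝ) < 1 - q ^ (n + 2) := by
      have : q ^ (n + 2) < 1 := pow_lt_one₀ hq0.le hq1 (Nat.succ_ne_zero (n + 1))
      linarith
    rw [e2, e1]
    field_simp
  rw [← hval]
  refine h1.congr' ?_
  have hmem : Set.Ioo (0:ℝ) ((1 - q) / 2) ∈ 𝓝[>] (0:ℝ) :=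
    Ioo_mem_nhdsGT_of_mem (by constructor <;> [rfl; linarith])
  filter_upwards [hmem] with z hz
  have hz0 : (0:ℝ) < z := hz.1
  have hzp : (z ^ (n + 1)) ^ 2 ≠ 0 := by positivity
  rw [qexpTail_eq hq0 hq1 z n, qexpTail_eq hq0 hq1 z (n + 2), qexpTail_eq hq0 hq1 z (n + 1)]
  have hpow : z ^ n * z ^ (n + 2) = (z ^ (n + 1)) ^ 2 := by ring
  calc Sq q z n * Sq q z (n + 2) / Sq q z (n + 1) ^ 2
      = (z ^ (n + 1)) ^ 2 * (Sq q z n * Sq q z (n + 2)) / ((z ^ (n + 1)) ^ 2 * Sq q z (n + 1) ^ 2) := by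
        rw [mul_div_mul_left _ _ hzp]
    _ = z ^ n * Sq q z n * (z ^ (n + 2) * Sq q z (n + 2)) / (z ^ (n + 1) * Sq q z (n + 1)) ^ 2 := by
        rw [← hpow]; ring_nf
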